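/- Let c ∈ ℝ and let F(v) := c · ∂(v²) for v ∈ C([0,1],ℝ), where ∂ is the distributional derivative. Then for all v, w ∈ C([0,1],ℝ): ‖F(v) − F(w)‖_{H^{−1}} = |c| · (∑_{n=1}^∞ 2 |∫_0^1 (v(x)² − w(x)²) cos(nπx) dx|²)^{1/2} ≤ |c| (‖v‖_∞ + ‖w‖_∞) ‖v − w‖_∞. In particular, for every r ∈ (0,∞) and all v, w with ‖v‖_∞ ≤ r and ‖w‖_∞ ≤ r one has ‖F(v) − F(w)‖_{H^{−1}} ≤ 2 r |c| ‖v − w‖_∞, so F is Lipschitz on bounded subsets of C([0,1],ℝ) with values in H^{−1}((0,1),ℝ). -/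

import Mathlib

open MeasureTheory Real

noncomputable section

/-- The `n`-th cosine coefficient `∫_0^1 u(x) cos(nπx) dx` (with the index shift
`n ↦ n+1`, so that the modes are `n = 1, 2, …`). -/
def cosCoeff (u : ℝ → ℝ) (n : ℕ) : ℝ :=
  ∫ x in (0:ℝ)..1, u x * Real.cos (((n:ℝ) + 1) * Real.pi * x)

/-- The `H^{−1}` norm of the distributional derivative `∂u` of `u ∈ L²((0,1),ℝ)`:
`‖∂u‖_{H^{−1}} = (∑_{n=1}^∞ 2 |∫_0^1 u(x) cos(nπx) dx|²)^{1/2}`. -/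
def derivHm1norm (u : ℝ → ℝ) : ℝ :=
  Real.sqrt (∑' n : ℕ, 2 * (cosCoeff u n) ^ 2)

end

lemma integral_cos_int (k : ℤ) :
    ∫ x in (0:ℝ)..1, Real.cos ((k:ℝ) * Real.pi * x) = if k = 0 then 1 else 0 := by
  rcases eq_or_ne k 0 with hk | hk
  · simp [hk]
  · have hkπ : (k:ℝ) * Real.pi ≠ 0 := mul_ne_zero (Int.cast_ne_zero.2 hk) Real.pi_ne_zero
    have h := intervalIntegral.integral_comp_mul_left (a := (0:ℝ)) (b := 1)
      (fun x => Real.cos x) hkπ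
    simp only [mul_zero, mul_one, integral_cos, Real.sin_zero, sub_zero,
      smul_eq_mul] at h
    rw [if_neg hk]
    rw [h, Real.sin_int_mul_pi, mul_zero]

lemma cos_mul_cos_eq (A B : ℝ) :
    Real.cos A * Real.cos B = (Real.cos (A - B) + Real.cos (A + B)) / 2 := by
  rw [Real.cos_sub, Real.cos_add]; ring

lemma integral_cos_mul_cos (m n : ℕ) :
    ∫ x in (0:ℝ)..1,
      Real.cos (((m:ℝ)+1) * Real.pi * x) * Real.cos (((n:ℝ)+1) * Real.pi * x)
      = if m = n then 1/2 else 0 := by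
  have h1 : ∀ x : ℝ, Real.cos (((m:ℝ)+1) * Real.pi * x) * Real.cos (((n:ℝ)+1) * Real.pi * x)
      = (Real.cos ((((m:ℤ) - n : ℤ):ℝ) * Real.pi * x)
        + Real.cos ((((m:ℤ) + n + 2 : ℤ):ℝ) * Real.pi * x)) / 2 := by
    intro x
    rw [cos_mul_cos_eq]
    have e1 : ((m:ℝ)+1) * Real.pi * x - ((n:ℝ)+1) * Real.pi * x
        = (((m:ℤ) - n : ℤ):ℝ) * Real.pi * x := by push_cast; ring
    have e2 : ((m:ℝ)+1) * Real.pi * x + ((n:ℝ)+1) * Real.pi * x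
        = (((m:ℤ) + n + 2 : ℤ):ℝ) * Real.pi * x := by push_cast; ring
    rw [e1, e2]
  simp_rw [h1]
  have hint : ∀ k : ℤ, IntervalIntegrable (fun x => Real.cos ((k:ℝ) * Real.pi * x))
      MeasureTheory.volume 0 1 := fun k =>
    (Real.continuous_cos.comp (by continuity)).intervalIntegrable 0 1
  rw [intervalIntegral.integral_div, intervalIntegral.integral_add (hint _) (hint _),
    integral_cos_int, integral_cos_int]
  rcases eq_or_ne m n with h | h
  · subst h
    rw [if_pos (by ring), if_neg (by omega), if_pos rfl]
    norm_num
  · rw [if_neg (by omega), if_neg (by omega), if_neg h]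
    norm_num
open MeasureTheory Real
section Aux2
noncomputable def μ01 : Measure ℝ := volume.restrict (Set.Ioc (0:ℝ) 1)

instance : IsFiniteMeasure μ01 := by
  constructor
  rw [μ01, Measure.restrict_apply_univ, Real.volume_Ioc]
  norm_num

lemma memL2_of_cont_bdd {f : ℝ → ℝ} (hf : ContinuousOn f (Set.Icc (0:ℝ) 1)) (M : ℝ)
    (hM : ∀ x ∈ Set.Icc (0:ℝ) 1, |f x| ≤ M) : MemLp f 2 μ01 := by
  apply MemLp.of_bound
    ((hf.mono Set.Ioc_subset_Icc_self).aestronglyMeasurable measurableSet_Ioc) M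
  exact (ae_restrict_iff' measurableSet_Ioc).2
    (ae_of_all _ fun x hx => by
      rw [Real.norm_eq_abs]; exact hM x (Set.Ioc_subset_Icc_self hx))

noncomputable def eFun (n : ℕ) (x : ℝ) : ℝ := Real.sqrt 2 * Real.cos (((n:ℝ)+1) * Real.pi * x)

lemma eFun_mem (n : ℕ) : MemLp (eFun n) 2 μ01 := by
  apply memL2_of_cont_bdd (Continuous.continuousOn (by unfold eFun; continuity)) (Real.sqrt 2)
  intro x _
  rw [eFun, abs_mul, abs_of_nonneg (Real.sqrt_nonneg 2)]
  calc Real.sqrt 2 * |Real.cos (((n:ℝ)+1) * Real.pi * x)| ≤ Real.sqrt 2 * 1 := by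
        exact mul_le_mul_of_nonneg_left (Real.abs_cos_le_one _) (Real.sqrt_nonneg 2)
    _ = Real.sqrt 2 := mul_one _

lemma inner_toLp' {f g : ℝ → ℝ} (hf : MemLp f 2 μ01) (hg : MemLp g 2 μ01) :
    (inner ℝ (hf.toLp f) (hg.toLp g) : ℝ) = ∫ x, f x * g x ∂μ01 := by
  rw [L2.inner_def]
  apply integral_congr_ae
  filter_upwards [hf.coeFn_toLp, hg.coeFn_toLp] with x hfx hgx
  simp [hfx, hgx, RCLike.inner_apply, mul_comm]
end Aux2
section Aux3
noncomputable def eLp (n : ℕ) : Lp ℝ 2 μ01 := (eFun_mem n).toLp _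

lemma eLp_orthonormal : Orthonormal ℝ eLp := by
  rw [orthonormal_iff_ite]
  intro m n
  rw [eLp, eLp, inner_toLp' (eFun_mem m) (eFun_mem n)]
  have h0 : (∫ x, eFun m x * eFun n x ∂μ01) = ∫ x in (0:ℝ)..1, eFun m x * eFun n x :=
    (intervalIntegral.integral_of_le zero_le_one).symm
  have h1 : ∀ x : ℝ, eFun m x * eFun n x
      = 2 * (Real.cos (((m:ℝ)+1) * Real.pi * x) * Real.cos (((n:ℝ)+1) * Real.pi * x)) := by
    intro x
    rw [eFun, eFun]
    have : Real.sqrt 2 * Real.sqrt 2 = 2 := Real.mul_self_sqrt (by norm_num)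
    linear_combination (Real.cos (((m:ℝ)+1) * Real.pi * x) * Real.cos (((n:ℝ)+1) * Real.pi * x)) * this
  rw [h0]
  simp_rw [h1]
  rw [intervalIntegral.integral_const_mul, integral_cos_mul_cos]
  split <;> norm_num

lemma bessel {u : ℝ → ℝ} (hu : MemLp u 2 μ01) :
    ∑' n, 2 * (cosCoeff u n) ^ 2 ≤ ∫ x in Set.Ioc (0:ℝ) 1, u x ^ 2 := by
  have h := eLp_orthonormal.tsum_inner_products_le (hu.toLp u)
  have hinner : ∀ n, (inner ℝ (eLp n) (hu.toLp u) : ℝ) = Real.sqrt 2 * cosCoeff u n := by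
    intro n
    rw [eLp, inner_toLp' (eFun_mem n) hu, cosCoeff]
    rw [intervalIntegral.integral_of_le zero_le_one]
    rw [← MeasureTheory.integral_const_mul]
    apply integral_congr_ae
    apply ae_of_all
    intro x
    show eFun n x * u x = Real.sqrt 2 * (u x * Real.cos (((n:ℝ)+1) * Real.pi * x))
    rw [eFun]; ring
  have hsq : ∀ n, ‖(inner ℝ (eLp n) (hu.toLp u) : ℝ)‖ ^ 2 = 2 * (cosCoeff u n) ^ 2 := by
    intro n
    rw [hinner n, Real.norm_eq_abs, sq_abs, mul_pow, Real.sq_sqrt (by norm_num : (2:ℝ) ≥ 0)]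
  simp_rw [hsq] at h
  have hnorm : ‖hu.toLp u‖ ^ 2 = ∫ x in Set.Ioc (0:ℝ) 1, u x ^ 2 := by
    rw [← real_inner_self_eq_norm_sq, inner_toLp' hu hu]
    apply integral_congr_ae
    exact ae_of_all _ fun x => by simp [sq]
  rw [hnorm] at h
  exact h
end Aux3
lemma derivHm1norm_le {u : ℝ → ℝ} (hu : ContinuousOn u (Set.Icc (0:ℝ) 1)) {M : ℝ}
    (hM0 : 0 ≤ M) (hM : ∀ x ∈ Set.Icc (0:ℝ) 1, |u x| ≤ M) : derivHm1norm u ≤ M := by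
  have h1 := bessel (memL2_of_cont_bdd hu M hM)
  have hint : IntegrableOn (fun x => u x ^ 2) (Set.Ioc (0:ℝ) 1) :=
    ((hu.pow 2).integrableOn_Icc).mono_set Set.Ioc_subset_Icc_self
  have h2 : ∫ x in Set.Ioc (0:ℝ) 1, u x ^ 2 ≤ M ^ 2 := by
    have hle : ∫ x in Set.Ioc (0:ℝ) 1, u x ^ 2 ≤ ∫ _x in Set.Ioc (0:ℝ) 1, M ^ 2 := by
      apply setIntegral_mono_on hint (integrableOn_const (by
        rw [Real.volume_Ioc]; norm_num)) measurableSet_Ioc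
      intro x hx
      have := hM x (Set.Ioc_subset_Icc_self hx)
      nlinarith [abs_nonneg (u x), sq_abs (u x)]
    calc ∫ x in Set.Ioc (0:ℝ) 1, u x ^ 2 ≤ ∫ _x in Set.Ioc (0:ℝ) 1, M ^ 2 := hle
      _ = M ^ 2 := by
          rw [setIntegral_const, Real.volume_real_Ioc]
          norm_num
  rw [derivHm1norm]
  calc Real.sqrt (∑' n : ℕ, 2 * (cosCoeff u n) ^ 2) ≤ Real.sqrt (M ^ 2) :=
        Real.sqrt_le_sqrt (h1.trans h2)
    _ = M := Real.sqrt_sq hM0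

lemma sup_abs_spec {f : ℝ → ℝ} (hf : ContinuousOn f (Set.Icc (0:ℝ) 1)) :
    (0 ≤ ⨆ x : Set.Icc (0:ℝ) 1, |f x|) ∧
      ∀ x ∈ Set.Icc (0:ℝ) 1, |f x| ≤ ⨆ x : Set.Icc (0:ℝ) 1, |f x| := by
  have hb : BddAbove (Set.range fun x : Set.Icc (0:ℝ) 1 => |f x|) := by
    have h := (isCompact_Icc.image_of_continuousOn hf.abs).bddAbove
    rwa [← Set.range_restrict] at h
  have hle : ∀ x ∈ Set.Icc (0:ℝ) 1, |f x| ≤ ⨆ x : Set.Icc (0:ℝ) 1, |f x| := fun x hx =>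
    le_ciSup hb (⟨x, hx⟩ : Set.Icc (0:ℝ) 1)
  exact ⟨(abs_nonneg _).trans (hle 0 (by norm_num)), hle⟩


/-- **Lemma `BurgerNonl`.** Let `c ∈ ℝ` and `F(v) = c ∂(v²)`. For all
continuous `v, w : [0,1] → ℝ`:
`‖F(v) − F(w)‖_{H^{−1}} = |c| (∑_{n≥1} 2 |∫_0^1 (v² − w²) cos(nπx) dx|²)^{1/2}
  ≤ |c| (‖v‖_∞ + ‖w‖_∞) ‖v − w‖_∞`,
and in particular `‖F(v) − F(w)‖_{H^{−1}} ≤ 2 r |c| ‖v − w‖_∞` whenever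
`‖v‖_∞, ‖w‖_∞ ≤ r`. -/
theorem stmt_8 (c : ℝ) (v w : ℝ → ℝ)
    (hv : ContinuousOn v (Set.Icc (0:ℝ) 1)) (hw : ContinuousOn w (Set.Icc (0:ℝ) 1)) :
    derivHm1norm (fun x => c * (v x ^ 2 - w x ^ 2)) =
      |c| * derivHm1norm (fun x => v x ^ 2 - w x ^ 2) ∧
    |c| * derivHm1norm (fun x => v x ^ 2 - w x ^ 2) ≤
      |c| * ((⨆ x : Set.Icc (0:ℝ) 1, |v x|) + ⨆ x : Set.Icc (0:ℝ) 1, |w x|) *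
        ⨆ x : Set.Icc (0:ℝ) 1, |v x - w x| ∧
    ∀ r : ℝ, 0 < r → (⨆ x : Set.Icc (0:ℝ) 1, |v x|) ≤ r →
      (⨆ x : Set.Icc (0:ℝ) 1, |w x|) ≤ r →
      derivHm1norm (fun x => c * (v x ^ 2 - w x ^ 2)) ≤
        2 * r * |c| * ⨆ x : Set.Icc (0:ℝ) 1, |v x - w x| := by
  set Sv := ⨆ x : Set.Icc (0:ℝ) 1, |v x| with hSv
  set Sw := ⨆ x : Set.Icc (0:ℝ) 1, |w x| with hSw
  set Svw := ⨆ x : Set.Icc (0:ℝ) 1, |v x - w x| with hSvw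
  obtain ⟨hSv0, hSvle⟩ := sup_abs_spec hv
  obtain ⟨hSw0, hSwle⟩ := sup_abs_spec hw
  obtain ⟨hSvw0, hSvwle⟩ := sup_abs_spec (hv.sub hw)
  have hucont : ContinuousOn (fun x => v x ^ 2 - w x ^ 2) (Set.Icc (0:ℝ) 1) :=
    (hv.pow 2).sub (hw.pow 2)
  have hptwise : ∀ x ∈ Set.Icc (0:ℝ) 1, |v x ^ 2 - w x ^ 2| ≤ (Sv + Sw) * Svw := by
    intro x hx
    have h1 : |v x ^ 2 - w x ^ 2| = |v x + w x| * |v x - w x| := by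
      rw [← abs_mul]; congr 1; ring
    rw [h1]
    exact mul_le_mul ((abs_add_le _ _).trans (add_le_add (hSvle x hx) (hSwle x hx)))
      (hSvwle x hx) (abs_nonneg _) (by positivity)
  have hMnn : 0 ≤ (Sv + Sw) * Svw := by positivity
  have hbound : derivHm1norm (fun x => v x ^ 2 - w x ^ 2) ≤ (Sv + Sw) * Svw :=
    derivHm1norm_le hucont hMnn hptwise
  have hscale : derivHm1norm (fun x => c * (v x ^ 2 - w x ^ 2)) =
      |c| * derivHm1norm (fun x => v x ^ 2 - w x ^ 2) := by
    rw [derivHm1norm, derivHm1norm]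
    have hc : ∀ n, cosCoeff (fun x => c * (v x ^ 2 - w x ^ 2)) n
        = c * cosCoeff (fun x => v x ^ 2 - w x ^ 2) n := by
      intro n
      rw [cosCoeff, cosCoeff, ← intervalIntegral.integral_const_mul]
      apply intervalIntegral.integral_congr
      intro x _
      ring
    have heq : ∀ n : ℕ, 2 * (cosCoeff (fun x => c * (v x ^ 2 - w x ^ 2)) n) ^ 2
        = c ^ 2 * (2 * (cosCoeff (fun x => v x ^ 2 - w x ^ 2) n) ^ 2) := by
      intro n; rw [hc n]; ring
    simp_rw [heq]
    rw [tsum_mul_left, Real.sqrt_mul (sq_nonneg c), Real.sqrt_sq_eq_abs]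
  refine ⟨hscale, ?_, ?_⟩
  · calc |c| * derivHm1norm (fun x => v x ^ 2 - w x ^ 2)
        ≤ |c| * ((Sv + Sw) * Svw) := mul_le_mul_of_nonneg_left hbound (abs_nonneg c)
      _ = |c| * (Sv + Sw) * Svw := by ring
  · intro r hr hvr hwr
    rw [hscale]
    calc |c| * derivHm1norm (fun x => v x ^ 2 - w x ^ 2)
        ≤ |c| * ((Sv + Sw) * Svw) := mul_le_mul_of_nonneg_left hbound (abs_nonneg c)
      _ ≤ |c| * ((r + r) * Svw) := by gcongr
      _ = 2 * r * |c| * Svw := by ring
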